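/- Let (H,x) be a properly r-boundaried weighted graph and let p be a positive integer. Then there exists a properly r-boundaried weighted graph (H',x') with at most 2^{2^{r−1}} + r vertices such that for every r-boundaried weighted graph (F,y) the following holds: if the graph G = (F,y)⊕_b(H,x) is connected and λ(G) ≤ p, then (F,y)⊕_b(H',x') is connected and λ((F,y)⊕_b(H',x')) = λ(G). -/

import Mathlib

open scoped Classical

/-- The weighted connectivity of `(G,w)`: the largest `k ∈ ℕ∞` such that deleting any
edge set of total weight at most `k - 1` leaves `G` connected (`+∞` for a one-vertex
graph). -/
noncomputable def weightConn {V : Type*} [Fintype V] (G : SimpleGraph V) (w : Sym2 V → ℕ) :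
    ℕ∞ :=
  sSup {k : ℕ∞ | ∀ S : Finset (Sym2 V), ↑S ⊆ G.edgeSet →
    (∑ e ∈ S, (w e : ℕ∞)) < k → (G.deleteEdges ↑S).Connected}

/-- `(H,x)` is a properly `r`-boundaried graph: the boundary vertices are pairwise
nonadjacent and every connected component of `H` contains a boundary vertex. -/
def ProperB {VH : Type*} {r : ℕ} (H : SimpleGraph VH) (x : Fin r ↪ VH) : Prop :=
  (∀ i j, ¬ H.Adj (x i) (x j)) ∧ ∀ v : VH, ∃ i, H.Reachable v (x i)

/-- The boundary sum `(F,y) ⊕_b (H,x)`: disjoint copies of `F` and `H` with the `i`-th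
boundary vertex of `H` identified with the `i`-th boundary vertex of `F`. -/
def BSum {VF VH : Type*} {r : ℕ} (F : SimpleGraph VF) (y : Fin r → VF)
    (H : SimpleGraph VH) (x : Fin r → VH) :
    SimpleGraph (VF ⊕ {v : VH // v ∉ Set.range x}) :=
  SimpleGraph.fromRel fun a b =>
    match a, b with
    | Sum.inl a, Sum.inl b => F.Adj a b
    | Sum.inr a, Sum.inr b => H.Adj a.1 b.1
    | Sum.inl a, Sum.inr b => ∃ i, y i = a ∧ H.Adj (x i) b.1
    | Sum.inr _, Sum.inl _ => False

/-- Auxiliary (ordered) weight function for the boundary sum. -/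
noncomputable def bw {VF VH : Type*} {r : ℕ} (wF : Sym2 VF → ℕ) (wH : Sym2 VH → ℕ)
    (y : Fin r → VF) (x : Fin r → VH) :
    (VF ⊕ {v : VH // v ∉ Set.range x}) → (VF ⊕ {v : VH // v ∉ Set.range x}) → ℕ
  | Sum.inl a, Sum.inl b => wF s(a, b)
  | Sum.inr a, Sum.inr b => wH s(a.1, b.1)
  | Sum.inl a, Sum.inr b => ∑ i : Fin r, if y i = a then wH s(x i, b.1) else 0
  | Sum.inr a, Sum.inl b => ∑ i : Fin r, if y i = b then wH s(x i, a.1) else 0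

/-- The edge weights of the boundary sum `(F,y) ⊕_b (H,x)`, inherited from `wF` and
`wH`. -/
noncomputable def BSumW {VF VH : Type*} {r : ℕ} (wF : Sym2 VF → ℕ) (wH : Sym2 VH → ℕ)
    (y : Fin r → VF) (x : Fin r → VH) :
    Sym2 (VF ⊕ {v : VH // v ∉ Set.range x}) → ℕ :=
  Sym2.lift ⟨bw wF wH y x, by
    intro u v
    cases u <;> cases v <;> simp only [bw] <;> first | rfl | rw [Sym2.eq_swap]⟩

section cutmach
variable {V : Type*} [Fintype V]

noncomputable def owt (G : SimpleGraph V) (w : Sym2 V → ℕ) (X : Set V) : ℕ :=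
  ∑ a : V, ∑ b : V, if a ∈ X ∧ b ∉ X ∧ G.Adj a b then w s(a, b) else 0

lemma owt_instIrrel {V : Type*} (i1 i2 : Fintype V) (G : SimpleGraph V) (w : Sym2 V → ℕ)
    (X : Set V) : @owt V i1 G w X = @owt V i2 G w X := by
  cases Subsingleton.elim i1 i2
  rfl

noncomputable def cutE (G : SimpleGraph V) (X : Set V) : Finset (Sym2 V) :=
  G.edgeFinset.filter (fun e => ∃ a b, a ∈ X ∧ b ∉ X ∧ e = s(a, b))

lemma cutE_subset (G : SimpleGraph V) (X : Set V) : ↑(cutE G X) ⊆ G.edgeSet := by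
  intro e he
  simp only [cutE, Finset.coe_filter, Set.mem_setOf_eq, SimpleGraph.mem_edgeFinset] at he
  exact he.1

lemma owt_compl (G : SimpleGraph V) (w : Sym2 V → ℕ) (X : Set V) :
    owt G w Xᶜ = owt G w X := by
  unfold owt
  rw [Finset.sum_comm]
  refine Finset.sum_congr rfl fun a _ => Finset.sum_congr rfl fun b _ => ?_
  by_cases h : b ∈ X
  · by_cases h2 : a ∈ X <;> simp [h, h2, Sym2.eq_swap, G.adj_comm a b]
  · by_cases h2 : a ∈ X <;> simp [h, h2, Sym2.eq_swap, G.adj_comm a b]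

lemma sum_cutE (G : SimpleGraph V) (w : Sym2 V → ℕ) (X : Set V) :
    ∑ e ∈ cutE G X, w e = owt G w X := by
  have step1 : ∀ a b : V,
      (if a ∈ X ∧ b ∉ X ∧ G.Adj a b then w s(a, b) else 0)
        = ∑ e ∈ cutE G X, if e = s(a, b) ∧ a ∈ X ∧ b ∉ X then w e else 0 := by
    intro a b
    by_cases hab : a ∈ X ∧ b ∉ X
    · have : (∑ e ∈ cutE G X, if e = s(a, b) ∧ a ∈ X ∧ b ∉ X then w e else 0)
          = ∑ e ∈ cutE G X, if s(a,b) = e then w e else 0 := by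
        refine Finset.sum_congr rfl fun e _ => ?_
        by_cases h : e = s(a,b) <;> simp [h, hab.1, hab.2, eq_comm]
      rw [this, Finset.sum_ite_eq (cutE G X) (s(a,b)) w]
      by_cases hadj : G.Adj a b
      · have hmem : s(a,b) ∈ cutE G X := by
          simp only [cutE, Finset.mem_filter, SimpleGraph.mem_edgeFinset,
            SimpleGraph.mem_edgeSet]
          exact ⟨hadj, a, b, hab.1, hab.2, rfl⟩
        simp [hmem, hab.1, hab.2, hadj]
      · have hmem : s(a,b) ∉ cutE G X := by
          simp only [cutE, Finset.mem_filter, SimpleGraph.mem_edgeFinset,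
            SimpleGraph.mem_edgeSet]
          tauto
        simp [hmem, hadj]
    · rw [Finset.sum_eq_zero]
      · simp only [ite_eq_right_iff]; tauto
      · intro e _
        simp only [ite_eq_right_iff]; tauto
  have howt : owt G w X = ∑ a : V, ∑ b : V, ∑ e ∈ cutE G X,
      if e = s(a, b) ∧ a ∈ X ∧ b ∉ X then w e else 0 := by
    unfold owt
    exact Finset.sum_congr rfl fun a _ => Finset.sum_congr rfl fun b _ => step1 a b
  rw [howt, Finset.sum_comm]
  have hsw : ∀ b : V, (∑ a : V, ∑ e ∈ cutE G X, if e = s(a, b) ∧ a ∈ X ∧ b ∉ X then w e else 0)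
      = ∑ e ∈ cutE G X, ∑ a : V, if e = s(a, b) ∧ a ∈ X ∧ b ∉ X then w e else 0 :=
    fun b => Finset.sum_comm
  rw [Finset.sum_congr rfl fun b _ => hsw b, Finset.sum_comm]
  refine Finset.sum_congr rfl fun e he => ?_
  simp only [cutE, Finset.mem_filter, SimpleGraph.mem_edgeFinset, SimpleGraph.mem_edgeSet] at he
  obtain ⟨hadj, a₀, b₀, ha₀, hb₀, rfl⟩ := he
  have hadj' : G.Adj a₀ b₀ := hadj
  have hne : a₀ ≠ b₀ := hadj'.ne
  rw [Finset.sum_eq_single b₀ (fun b _ hb => ?_) (by simp)]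
  · rw [Finset.sum_eq_single a₀ (fun a _ ha => ?_) (by simp)]
    · simp [ha₀, hb₀]
    · rw [if_neg]
      rintro ⟨heq, hX, hXc⟩
      rw [Sym2.eq_iff] at heq
      rcases heq with ⟨h1, h2⟩ | ⟨h1, h2⟩
      · exact ha h1.symm
      · exact hne h1
  · rw [Finset.sum_eq_zero]
    intro a _
    rw [if_neg]
    rintro ⟨heq, hX, hXc⟩
    rw [Sym2.eq_iff] at heq
    rcases heq with ⟨h1, h2⟩ | ⟨h1, h2⟩
    · exact hb h2.symm
    · exact hb₀ (by rw [h2]; exact hX)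

lemma walk_stay {G : SimpleGraph V} {s : Set (Sym2 V)} {X : Set V}
    (hcut : ∀ a b, a ∈ X → b ∉ X → G.Adj a b → s(a, b) ∈ s) :
    ∀ {u v : V}, (G.deleteEdges s).Walk u v → u ∈ X → v ∈ X := by
  intro u v p
  induction p with
  | nil => exact id
  | @cons u' c' v' h q ih =>
    intro hu
    rw [SimpleGraph.deleteEdges_adj] at h
    by_cases hc : c' ∈ X
    · exact ih hc
    · exact absurd (hcut _ _ hu hc h.1) h.2

lemma not_connected_delete_cutE (G : SimpleGraph V) {X : Set V}
    (hne : X.Nonempty) (hco : Xᶜ.Nonempty) :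
    ¬ (G.deleteEdges ↑(cutE G X)).Connected := by
  intro h
  obtain ⟨u, hu⟩ := hne
  obtain ⟨v, hv⟩ := hco
  obtain ⟨p⟩ := h.preconnected u v
  refine hv (walk_stay (fun a b ha hb hadj => ?_) p hu)
  simp only [Finset.mem_coe, cutE, Finset.mem_filter, SimpleGraph.mem_edgeFinset,
    SimpleGraph.mem_edgeSet]
  exact ⟨hadj, a, b, ha, hb, rfl⟩

lemma exists_cut_of_not_connected (G : SimpleGraph V) (w : Sym2 V → ℕ) [Nonempty V]
    {S : Finset (Sym2 V)}
    (h : ¬ (G.deleteEdges ↑S).Connected) :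
    ∃ X : Set V, X.Nonempty ∧ Xᶜ.Nonempty ∧ owt G w X ≤ ∑ e ∈ S, w e := by
  have hpre : ¬ (G.deleteEdges ↑S).Preconnected := fun hp => h ⟨hp⟩
  unfold SimpleGraph.Preconnected at hpre
  push_neg at hpre
  obtain ⟨u, v, huv⟩ := hpre
  refine ⟨{z | (G.deleteEdges ↑S).Reachable u z}, ⟨u, SimpleGraph.Reachable.refl u⟩,
    ⟨v, huv⟩, ?_⟩
  rw [← sum_cutE G w]
  refine Finset.sum_le_sum_of_subset fun e he => ?_
  simp only [cutE, Finset.mem_filter, SimpleGraph.mem_edgeFinset, SimpleGraph.mem_edgeSet] at he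
  obtain ⟨hadj, a, b, ha, hb, rfl⟩ := he
  by_contra hS
  exact hb (ha.trans (SimpleGraph.Adj.reachable (by
    rw [SimpleGraph.deleteEdges_adj]
    exact ⟨hadj, hS⟩)))

lemma transfer {V1 V2 : Type*} [Fintype V1] [Fintype V2]
    (G1 : SimpleGraph V1) (w1 : Sym2 V1 → ℕ) (G2 : SimpleGraph V2) (w2 : Sym2 V2 → ℕ)
    [Nonempty V2]
    (h1 : G1.Connected)
    (pos1 : ∀ e ∈ G1.edgeSet, 0 < w1 e)
    (c12 : ∀ X1 : Set V1, X1.Nonempty → X1ᶜ.Nonempty →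
      ∃ X2 : Set V2, X2.Nonempty ∧ X2ᶜ.Nonempty ∧ owt G2 w2 X2 ≤ owt G1 w1 X1)
    (c21 : ∀ X2 : Set V2, X2.Nonempty → X2ᶜ.Nonempty →
      ∃ X1 : Set V1, X1.Nonempty ∧ X1ᶜ.Nonempty ∧ owt G1 w1 X1 ≤ owt G2 w2 X2) :
    G2.Connected ∧ weightConn G2 w2 = weightConn G1 w1 := by
  have hNE1 : Nonempty V1 := h1.nonempty
  -- helper: a cut of G1 of weight 0 is impossible
  have nocut1 : ∀ X1 : Set V1, X1.Nonempty → X1ᶜ.Nonempty → 0 < owt G1 w1 X1 := by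
    intro X1 hne hco
    by_contra hz
    push_neg at hz
    interval_cases h : owt G1 w1 X1
    have hcut : cutE G1 X1 = ∅ := by
      by_contra hne'
      obtain ⟨e, he⟩ := Finset.nonempty_iff_ne_empty.2 hne'
      have hpos := pos1 e (cutE_subset G1 X1 he)
      have : 0 < ∑ e ∈ cutE G1 X1, w1 e :=
        lt_of_lt_of_le hpos (Finset.single_le_sum (fun _ _ => Nat.zero_le _) he)
      rw [sum_cutE, h] at this
      exact lt_irrefl 0 this
    have := not_connected_delete_cutE G1 (X := X1) hne hco
    rw [hcut] at this
    simp only [Finset.coe_empty, SimpleGraph.deleteEdges_empty] at this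
    exact this h1
  constructor
  · by_contra h2
    have : ¬ (G2.deleteEdges ↑(∅ : Finset (Sym2 V2))).Connected := by
      simpa using h2
    obtain ⟨X2, hne, hco, hle⟩ := exists_cut_of_not_connected G2 w2 this
    simp only [Finset.sum_empty, Nat.le_zero] at hle
    obtain ⟨X1, hne1, hco1, hle1⟩ := c21 X2 hne hco
    have := nocut1 X1 hne1 hco1
    omega
  · have hset : {k : ℕ∞ | ∀ S : Finset (Sym2 V2), ↑S ⊆ G2.edgeSet →
        (∑ e ∈ S, (w2 e : ℕ∞)) < k → (G2.deleteEdges ↑S).Connected}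
      = {k : ℕ∞ | ∀ S : Finset (Sym2 V1), ↑S ⊆ G1.edgeSet →
        (∑ e ∈ S, (w1 e : ℕ∞)) < k → (G1.deleteEdges ↑S).Connected} := by
      ext k
      simp only [Set.mem_setOf_eq]
      constructor
      · intro P2 S1 hS1 hlt
        by_contra hdis
        obtain ⟨X1, hne, hco, hle⟩ := exists_cut_of_not_connected G1 w1 hdis
        obtain ⟨X2, hne2, hco2, hle2⟩ := c12 X1 hne hco
        have hC := P2 (cutE G2 X2) (cutE_subset G2 X2) ?_
        · exact not_connected_delete_cutE G2 hne2 hco2 hC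
        · calc (∑ e ∈ cutE G2 X2, (w2 e : ℕ∞))
              = ((∑ e ∈ cutE G2 X2, w2 e : ℕ) : ℕ∞) := by
                rw [Nat.cast_sum]
            _ ≤ ((∑ e ∈ S1, w1 e : ℕ) : ℕ∞) := by
                rw [sum_cutE]
                exact_mod_cast le_trans hle2 hle
            _ = ∑ e ∈ S1, (w1 e : ℕ∞) := by rw [Nat.cast_sum]
            _ < k := hlt
      · intro P1 S2 hS2 hlt
        by_contra hdis
        obtain ⟨X2, hne, hco, hle⟩ := exists_cut_of_not_connected G2 w2 hdis
        obtain ⟨X1, hne1, hco1, hle1⟩ := c21 X2 hne hco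
        have hC := P1 (cutE G1 X1) (cutE_subset G1 X1) ?_
        · exact not_connected_delete_cutE G1 hne1 hco1 hC
        · calc (∑ e ∈ cutE G1 X1, (w1 e : ℕ∞))
              = ((∑ e ∈ cutE G1 X1, w1 e : ℕ) : ℕ∞) := by rw [Nat.cast_sum]
            _ ≤ ((∑ e ∈ S2, w2 e : ℕ) : ℕ∞) := by
                rw [sum_cutE]
                exact_mod_cast le_trans hle1 hle
            _ = ∑ e ∈ S2, (w2 e : ℕ∞) := by rw [Nat.cast_sum]
            _ < k := hlt
    unfold weightConn
    rw [hset]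

end cutmach





section adj
variable {VF VK : Type*} {r : ℕ} (F : SimpleGraph VF) (K : SimpleGraph VK)
  (wF : Sym2 VF → ℕ) (wK : Sym2 VK → ℕ) (y : Fin r → VF) (z : Fin r → VK)

lemma bsum_adj_ll (a b : VF) :
    (BSum F y K z).Adj (Sum.inl a) (Sum.inl b) ↔ F.Adj a b := by
  simp only [BSum, SimpleGraph.fromRel_adj]
  constructor
  · rintro ⟨-, h | h⟩
    · exact h
    · exact h.symm
  · intro h
    exact ⟨by simp [h.ne], Or.inl h⟩

lemma bsum_adj_rr (a b : {v : VK // v ∉ Set.range z}) :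
    (BSum F y K z).Adj (Sum.inr a) (Sum.inr b) ↔ K.Adj a.1 b.1 := by
  simp only [BSum, SimpleGraph.fromRel_adj]
  constructor
  · rintro ⟨-, h | h⟩
    · exact h
    · exact h.symm
  · intro h
    refine ⟨?_, Or.inl h⟩
    simp only [ne_eq, Sum.inr.injEq]
    intro hab
    exact K.loopless.irrefl a.1 (by rw [hab] at h ⊢; exact h)

lemma bsum_adj_lr (a : VF) (b : {v : VK // v ∉ Set.range z}) :
    (BSum F y K z).Adj (Sum.inl a) (Sum.inr b) ↔ ∃ i, y i = a ∧ K.Adj (z i) b.1 := by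
  simp only [BSum, SimpleGraph.fromRel_adj]
  constructor
  · rintro ⟨-, h | h⟩
    · exact h
    · exact h.elim
  · intro h
    exact ⟨by simp, Or.inl h⟩

lemma bsum_adj_rl (a : VF) (b : {v : VK // v ∉ Set.range z}) :
    (BSum F y K z).Adj (Sum.inr b) (Sum.inl a) ↔ ∃ i, y i = a ∧ K.Adj (z i) b.1 := by
  rw [SimpleGraph.adj_comm]
  exact bsum_adj_lr F K y z a b

lemma bsumw_ll (a b : VF) :
    BSumW wF wK y z s(Sum.inl a, Sum.inl b) = wF s(a, b) := rfl

lemma bsumw_rr (a b : {v : VK // v ∉ Set.range z}) :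
    BSumW wF wK y z s(Sum.inr a, Sum.inr b) = wK s(a.1, b.1) := rfl

lemma bsumw_lr (a : VF) (b : {v : VK // v ∉ Set.range z}) :
    BSumW wF wK y z s(Sum.inl a, Sum.inr b)
      = ∑ i : Fin r, if y i = a then wK s(z i, b.1) else 0 := rfl

lemma bsumw_rl (a : VF) (b : {v : VK // v ∉ Set.range z}) :
    BSumW wF wK y z s(Sum.inr b, Sum.inl a)
      = ∑ i : Fin r, if y i = a then wK s(z i, b.1) else 0 := rfl

end adj

section decomp
variable {VF VK : Type*} [Fintype VF] [Fintype VK] {r : ℕ}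

def BXF {VF VK : Type*} {r : ℕ} (z : Fin r → VK)
    (X : Set (VF ⊕ {v : VK // v ∉ Set.range z})) : Set VF :=
  {a | Sum.inl a ∈ X}

def BXK {VF VK : Type*} {r : ℕ} (y : Fin r → VF) (z : Fin r → VK)
    (X : Set (VF ⊕ {v : VK // v ∉ Set.range z})) : Set VK :=
  {v | (∃ i, z i = v ∧ Sum.inl (y i) ∈ X) ∨ (∃ h : v ∉ Set.range z, Sum.inr ⟨v, h⟩ ∈ X)}

variable (y : Fin r → VF) (z : Fin r → VK)

lemma mem_BXK_z (hz : Function.Injective z) (X : Set (VF ⊕ {v : VK // v ∉ Set.range z}))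
    (i : Fin r) : z i ∈ BXK y z X ↔ Sum.inl (y i) ∈ X := by
  unfold BXK
  simp only [Set.mem_setOf_eq]
  constructor
  · rintro (⟨j, hji, hj⟩ | ⟨h, -⟩)
    · rwa [hz hji] at hj
    · exact absurd ⟨i, rfl⟩ h
  · intro h
    exact Or.inl ⟨i, rfl, h⟩

lemma mem_BXK_int (X : Set (VF ⊕ {v : VK // v ∉ Set.range z}))
    (q : {v : VK // v ∉ Set.range z}) : q.1 ∈ BXK y z X ↔ Sum.inr q ∈ X := by
  obtain ⟨v, hv⟩ := q
  unfold BXK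
  simp only [Set.mem_setOf_eq]
  constructor
  · rintro (⟨j, hji, hj⟩ | ⟨h, hmem⟩)
    · exact absurd ⟨j, hji⟩ hv
    · exact hmem
  · intro h
    exact Or.inr ⟨hv, h⟩

lemma sum_split (hz : Function.Injective z) (f : VK → ℕ) :
    ∑ v : VK, f v = (∑ i : Fin r, f (z i)) + ∑ q : {v : VK // v ∉ Set.range z}, f q.1 := by
  classical
  rw [← Finset.sum_filter_add_sum_filter_not Finset.univ (fun v => v ∈ Set.range z) f]
  congr 1
  · have himg : Finset.univ.filter (fun v => v ∈ Set.range z) = Finset.univ.image z := by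
      ext v
      simp [Set.mem_range, eq_comm]
    rw [himg, Finset.sum_image (fun i _ j _ h => hz h)]
  · rw [← Finset.sum_subtype (Finset.univ.filter (fun v => ¬ v ∈ Set.range z))
      (fun v => by simp) f]

lemma owt_BSum (F : SimpleGraph VF) (wF : Sym2 VF → ℕ) (K : SimpleGraph VK)
    (wK : Sym2 VK → ℕ) (hy : Function.Injective y) (hz : Function.Injective z)
    (hnadj : ∀ i j, ¬ K.Adj (z i) (z j))
    (X : Set (VF ⊕ {v : VK // v ∉ Set.range z})) :
    owt (BSum F y K z) (BSumW wF wK y z) X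
      = owt F wF (BXF z X) + owt K wK (BXK y z X) := by
  classical
  set XF := BXF z X with hXFdef
  set XK := BXK y z X with hXKdef
  -- named blocks
  set LL : ℕ := ∑ a : VF, ∑ b : VF,
    if Sum.inl a ∈ X ∧ Sum.inl b ∉ X ∧ (BSum F y K z).Adj (Sum.inl a) (Sum.inl b)
    then BSumW wF wK y z s(Sum.inl a, Sum.inl b) else 0 with hLLdef
  set LR : ℕ := ∑ a : VF, ∑ q : {v : VK // v ∉ Set.range z},
    if Sum.inl a ∈ X ∧ Sum.inr q ∉ X ∧ (BSum F y K z).Adj (Sum.inl a) (Sum.inr q)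
    then BSumW wF wK y z s(Sum.inl a, Sum.inr q) else 0 with hLRdef
  set RL : ℕ := ∑ q : {v : VK // v ∉ Set.range z}, ∑ a : VF,
    if Sum.inr q ∈ X ∧ Sum.inl a ∉ X ∧ (BSum F y K z).Adj (Sum.inr q) (Sum.inl a)
    then BSumW wF wK y z s(Sum.inr q, Sum.inl a) else 0 with hRLdef
  set RR : ℕ := ∑ q : {v : VK // v ∉ Set.range z}, ∑ q' : {v : VK // v ∉ Set.range z},
    if Sum.inr q ∈ X ∧ Sum.inr q' ∉ X ∧ (BSum F y K z).Adj (Sum.inr q) (Sum.inr q')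
    then BSumW wF wK y z s(Sum.inr q, Sum.inr q') else 0 with hRRdef
  have hLHS : owt (BSum F y K z) (BSumW wF wK y z) X = (LL + LR) + (RL + RR) := by
    unfold owt
    rw [Fintype.sum_sum_type]
    congr 1
    · rw [hLLdef, hLRdef, ← Finset.sum_add_distrib]
      exact Finset.sum_congr rfl fun a _ => Fintype.sum_sum_type _
    · rw [hRLdef, hRRdef, ← Finset.sum_add_distrib]
      exact Finset.sum_congr rfl fun q _ => Fintype.sum_sum_type _
  set BI : ℕ := ∑ i : Fin r, ∑ q : {v : VK // v ∉ Set.range z},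
    if z i ∈ XK ∧ q.1 ∉ XK ∧ K.Adj (z i) q.1 then wK s(z i, q.1) else 0 with hBIdef
  set IB : ℕ := ∑ q : {v : VK // v ∉ Set.range z}, ∑ j : Fin r,
    if q.1 ∈ XK ∧ z j ∉ XK ∧ K.Adj q.1 (z j) then wK s(q.1, z j) else 0 with hIBdef
  set II : ℕ := ∑ q : {v : VK // v ∉ Set.range z}, ∑ q' : {v : VK // v ∉ Set.range z},
    if q.1 ∈ XK ∧ q'.1 ∉ XK ∧ K.Adj q.1 q'.1 then wK s(q.1, q'.1) else 0 with hIIdef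
  have hRHS : owt K wK XK = BI + (IB + II) := by
    unfold owt
    have h1 : ∀ u : VK, (∑ v : VK, if u ∈ XK ∧ v ∉ XK ∧ K.Adj u v then wK s(u, v) else 0)
        = (∑ j : Fin r, if u ∈ XK ∧ z j ∉ XK ∧ K.Adj u (z j) then wK s(u, z j) else 0)
          + ∑ q : {v : VK // v ∉ Set.range z}, if u ∈ XK ∧ q.1 ∉ XK ∧ K.Adj u q.1 then wK s(u, q.1) else 0 :=
      fun u => sum_split z hz _
    calc ∑ u : VK, ∑ v : VK, (if u ∈ XK ∧ v ∉ XK ∧ K.Adj u v then wK s(u, v) else 0)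
        = ∑ u : VK, ((∑ j : Fin r, if u ∈ XK ∧ z j ∉ XK ∧ K.Adj u (z j) then wK s(u, z j) else 0)
          + ∑ q : {v : VK // v ∉ Set.range z}, if u ∈ XK ∧ q.1 ∉ XK ∧ K.Adj u q.1 then wK s(u, q.1) else 0) :=
          Finset.sum_congr rfl fun u _ => h1 u
      _ = ((∑ i : Fin r, ((∑ j : Fin r, if z i ∈ XK ∧ z j ∉ XK ∧ K.Adj (z i) (z j) then wK s(z i, z j) else 0)
          + ∑ q : {v : VK // v ∉ Set.range z}, if z i ∈ XK ∧ q.1 ∉ XK ∧ K.Adj (z i) q.1 then wK s(z i, q.1) else 0))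
          + ∑ q : {v : VK // v ∉ Set.range z}, ((∑ j : Fin r, if q.1 ∈ XK ∧ z j ∉ XK ∧ K.Adj q.1 (z j) then wK s(q.1, z j) else 0)
          + ∑ q' : {v : VK // v ∉ Set.range z}, if q.1 ∈ XK ∧ q'.1 ∉ XK ∧ K.Adj q.1 q'.1 then wK s(q.1, q'.1) else 0)) :=
          sum_split z hz _
      _ = BI + (IB + II) := by
          rw [Finset.sum_add_distrib, Finset.sum_add_distrib]
          have hBB : (∑ i : Fin r, ∑ j : Fin r,
              if z i ∈ XK ∧ z j ∉ XK ∧ K.Adj (z i) (z j) then wK s(z i, z j) else 0) = 0 := by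
            refine Finset.sum_eq_zero fun i _ => Finset.sum_eq_zero fun j _ => ?_
            exact if_neg fun h => hnadj i j h.2.2
          rw [hBB]
          ring

  have hLL : LL = owt F wF XF := by
    rw [hLLdef]
    unfold owt
    refine Finset.sum_congr rfl fun a _ => Finset.sum_congr rfl fun b _ => ?_
    rw [bsumw_ll]
    refine if_congr ?_ rfl rfl
    rw [bsum_adj_ll]
    exact Iff.rfl
  have hRR : RR = II := by
    rw [hRRdef, hIIdef]
    refine Finset.sum_congr rfl fun q _ => Finset.sum_congr rfl fun q' _ => ?_
    rw [bsumw_rr]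
    refine if_congr ?_ rfl rfl
    rw [bsum_adj_rr, hXKdef]
    rw [mem_BXK_int y z X q, mem_BXK_int y z X q']
  have hLR : LR = BI := by
    set f3 : VF → {v : VK // v ∉ Set.range z} → Fin r → ℕ := fun a q j =>
      if y j = a ∧ Sum.inl a ∈ X ∧ Sum.inr q ∉ X ∧ K.Adj (z j) q.1
      then wK s(z j, q.1) else 0 with hf3
    have step1 : ∀ (a : VF) (q : {v : VK // v ∉ Set.range z}),
        (if Sum.inl a ∈ X ∧ Sum.inr q ∉ X ∧ (BSum F y K z).Adj (Sum.inl a) (Sum.inr q)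
          then BSumW wF wK y z s(Sum.inl a, Sum.inr q) else 0)
        = ∑ j : Fin r, f3 a q j := by
      intro a q
      rw [hf3]
      simp only []
      rw [bsumw_lr]
      by_cases hP : Sum.inl a ∈ X ∧ Sum.inr q ∉ X
      · by_cases hE : ∃ i, y i = a ∧ K.Adj (z i) q.1
        · obtain ⟨i₀, hyi₀, hadj₀⟩ := hE
          rw [if_pos ⟨hP.1, hP.2, (bsum_adj_lr F K y z a q).2 ⟨i₀, hyi₀, hadj₀⟩⟩]
          refine Finset.sum_congr rfl fun j _ => ?_
          by_cases hj : y j = a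
          · have hji : j = i₀ := hy (hj.trans hyi₀.symm)
            subst hji
            rw [if_pos hj, if_pos ⟨hj, hP.1, hP.2, hadj₀⟩]
          · rw [if_neg hj, if_neg (fun h => hj h.1)]
        · rw [if_neg (fun h => hE ((bsum_adj_lr F K y z a q).1 h.2.2)), Finset.sum_eq_zero]
          intro j _
          rw [if_neg]
          rintro ⟨h1, -, -, h4⟩
          exact hE ⟨j, h1, h4⟩
      · rw [if_neg (fun h => hP ⟨h.1, h.2.1⟩), Finset.sum_eq_zero]
        intro j _
        rw [if_neg]
        rintro ⟨-, h2, h3, -⟩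
        exact hP ⟨h2, h3⟩
    have e1 : LR = ∑ a : VF, ∑ q : {v : VK // v ∉ Set.range z}, ∑ j : Fin r, f3 a q j := by
      rw [hLRdef]
      exact Finset.sum_congr rfl fun a _ => Finset.sum_congr rfl fun q _ => step1 a q
    have e2 : (∑ a : VF, ∑ q : {v : VK // v ∉ Set.range z}, ∑ j : Fin r, f3 a q j)
        = ∑ a : VF, ∑ j : Fin r, ∑ q : {v : VK // v ∉ Set.range z}, f3 a q j :=
      Finset.sum_congr rfl fun a _ => Finset.sum_comm
    have e3 : (∑ a : VF, ∑ j : Fin r, ∑ q : {v : VK // v ∉ Set.range z}, f3 a q j)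
        = ∑ j : Fin r, ∑ a : VF, ∑ q : {v : VK // v ∉ Set.range z}, f3 a q j := Finset.sum_comm
    have e4 : ∀ j : Fin r, (∑ a : VF, ∑ q : {v : VK // v ∉ Set.range z}, f3 a q j)
        = ∑ q : {v : VK // v ∉ Set.range z}, ∑ a : VF, f3 a q j := fun j => Finset.sum_comm
    have e5 : ∀ (j : Fin r) (q : {v : VK // v ∉ Set.range z}), (∑ a : VF, f3 a q j)
        = if Sum.inl (y j) ∈ X ∧ Sum.inr q ∉ X ∧ K.Adj (z j) q.1
          then wK s(z j, q.1) else 0 := by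
      intro j q
      have : ∀ a : VF, f3 a q j = if y j = a then
          (if Sum.inl a ∈ X ∧ Sum.inr q ∉ X ∧ K.Adj (z j) q.1
            then wK s(z j, q.1) else 0) else 0 := by
        intro a
        rw [hf3]
        simp only []
        rw [ite_and]
      rw [Finset.sum_congr rfl fun a _ => this a, Finset.sum_ite_eq]
      simp
    rw [e1, e2, e3, hBIdef]
    refine Finset.sum_congr rfl fun j _ => ?_
    rw [e4 j]
    refine Finset.sum_congr rfl fun q _ => ?_
    rw [e5 j q]
    refine if_congr ?_ rfl rfl
    rw [hXKdef, mem_BXK_z y z hz X j, mem_BXK_int y z X q]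
  have hRL : RL = IB := by
    set f4 : {v : VK // v ∉ Set.range z} → VF → Fin r → ℕ := fun q a j =>
      if y j = a ∧ Sum.inr q ∈ X ∧ Sum.inl a ∉ X ∧ K.Adj (z j) q.1
      then wK s(z j, q.1) else 0 with hf4
    have step1 : ∀ (q : {v : VK // v ∉ Set.range z}) (a : VF),
        (if Sum.inr q ∈ X ∧ Sum.inl a ∉ X ∧ (BSum F y K z).Adj (Sum.inr q) (Sum.inl a)
          then BSumW wF wK y z s(Sum.inr q, Sum.inl a) else 0)
        = ∑ j : Fin r, f4 q a j := by
      intro q a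
      rw [hf4]
      simp only []
      rw [bsumw_rl]
      by_cases hP : Sum.inr q ∈ X ∧ Sum.inl a ∉ X
      · by_cases hE : ∃ i, y i = a ∧ K.Adj (z i) q.1
        · obtain ⟨i₀, hyi₀, hadj₀⟩ := hE
          rw [if_pos ⟨hP.1, hP.2, (bsum_adj_rl F K y z a q).2 ⟨i₀, hyi₀, hadj₀⟩⟩]
          refine Finset.sum_congr rfl fun j _ => ?_
          by_cases hj : y j = a
          · have hji : j = i₀ := hy (hj.trans hyi₀.symm)
            subst hji
            rw [if_pos hj, if_pos ⟨hj, hP.1, hP.2, hadj₀⟩]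
          · rw [if_neg hj, if_neg (fun h => hj h.1)]
        · rw [if_neg (fun h => hE ((bsum_adj_rl F K y z a q).1 h.2.2)), Finset.sum_eq_zero]
          intro j _
          rw [if_neg]
          rintro ⟨h1, -, -, h4⟩
          exact hE ⟨j, h1, h4⟩
      · rw [if_neg (fun h => hP ⟨h.1, h.2.1⟩), Finset.sum_eq_zero]
        intro j _
        rw [if_neg]
        rintro ⟨-, h2, h3, -⟩
        exact hP ⟨h2, h3⟩
    have e1 : RL = ∑ q : {v : VK // v ∉ Set.range z}, ∑ a : VF, ∑ j : Fin r, f4 q a j := by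
      rw [hRLdef]
      exact Finset.sum_congr rfl fun q _ => Finset.sum_congr rfl fun a _ => step1 q a
    have e2 : ∀ q : {v : VK // v ∉ Set.range z}, (∑ a : VF, ∑ j : Fin r, f4 q a j)
        = ∑ j : Fin r, ∑ a : VF, f4 q a j := fun q => Finset.sum_comm
    have e5 : ∀ (q : {v : VK // v ∉ Set.range z}) (j : Fin r), (∑ a : VF, f4 q a j)
        = if Sum.inr q ∈ X ∧ Sum.inl (y j) ∉ X ∧ K.Adj (z j) q.1
          then wK s(z j, q.1) else 0 := by
      intro q j
      have : ∀ a : VF, f4 q a j = if y j = a then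
          (if Sum.inr q ∈ X ∧ Sum.inl a ∉ X ∧ K.Adj (z j) q.1
            then wK s(z j, q.1) else 0) else 0 := by
        intro a
        rw [hf4]
        simp only []
        rw [ite_and]
      rw [Finset.sum_congr rfl fun a _ => this a, Finset.sum_ite_eq]
      simp
    rw [e1, hIBdef]
    refine Finset.sum_congr rfl fun q _ => ?_
    rw [e2 q]
    refine Finset.sum_congr rfl fun j _ => ?_
    rw [e5 q j]
    refine if_congr ?_ (by rw [Sym2.eq_swap]) rfl
    rw [hXKdef, mem_BXK_z y z hz X j, mem_BXK_int y z X q, K.adj_comm]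
  rw [hLHS, hRHS, hLL, hLR, hRL, hRR]
  ring

end decomp

section construct
variable {r : ℕ} {VH : Type*} [Fintype VH]


def CutClass (H : SimpleGraph VH) (x : Fin r ↪ VH) (A : Finset (Fin r)) : Set (Set VH) :=
  {Z | (∀ i, x i ∈ Z ↔ i ∈ A) ∧ (∃ v, v ∉ Set.range ⇑x ∧ v ∈ Z)
    ∧ (∃ v, v ∉ Set.range ⇑x ∧ v ∉ Z)}

lemma CutClass_compl {H : SimpleGraph VH} {x : Fin r ↪ VH} {A : Finset (Fin r)} {Z : Set VH}
    (h : Z ∈ CutClass H x A) : Zᶜ ∈ CutClass H x Aᶜ := by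
  obtain ⟨h1, ⟨v1, hv1, hv1'⟩, ⟨v2, hv2, hv2'⟩⟩ := h
  refine ⟨fun i => ?_, ⟨v2, hv2, hv2'⟩, ⟨v1, hv1, by simpa using hv1'⟩⟩
  simp [h1 i]

variable (H : SimpleGraph VH) (wH : Sym2 VH → ℕ) (x : Fin r ↪ VH)

noncomputable def Ycut0 (A : Finset (Fin r)) : Set VH :=
  if h : ∃ Z ∈ CutClass H x A, ∀ Z' ∈ CutClass H x A, owt H wH Z ≤ owt H wH Z'
  then h.choose else ∅

lemma Ycut0_spec {A : Finset (Fin r)} (h : (CutClass H x A).Nonempty) :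
    Ycut0 H wH x A ∈ CutClass H x A
      ∧ ∀ Z' ∈ CutClass H x A, owt H wH (Ycut0 H wH x A) ≤ owt H wH Z' := by
  have hex : ∃ Z ∈ CutClass H x A, ∀ Z' ∈ CutClass H x A, owt H wH Z ≤ owt H wH Z' := by
    have hS : (owt H wH '' CutClass H x A).Nonempty := h.image _
    have hmem := Nat.sInf_mem hS
    obtain ⟨Z, hZ, hZeq⟩ := hmem
    refine ⟨Z, hZ, fun Z' hZ' => ?_⟩
    rw [hZeq]
    exact Nat.sInf_le ⟨Z', hZ', rfl⟩
  rw [Ycut0, dif_pos hex]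
  exact ⟨hex.choose_spec.1, hex.choose_spec.2⟩

def lastIn (A : Finset (Fin r)) : Prop := ∃ _h : 0 < r, (⟨r - 1, by omega⟩ : Fin r) ∈ A

noncomputable def Ycut (A : Finset (Fin r)) : Set VH :=
  if lastIn A then (Ycut0 H wH x Aᶜ)ᶜ else Ycut0 H wH x A

lemma lastIn_compl {A : Finset (Fin r)} (hr : 0 < r) : lastIn Aᶜ ↔ ¬ lastIn A := by
  unfold lastIn
  simp [hr]

lemma Ycut_spec {A : Finset (Fin r)} (h : (CutClass H x A).Nonempty) :
    Ycut H wH x A ∈ CutClass H x A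
      ∧ ∀ Z' ∈ CutClass H x A, owt H wH (Ycut H wH x A) ≤ owt H wH Z' := by
  unfold Ycut
  by_cases hl : lastIn A
  · rw [if_pos hl]
    have hc : (CutClass H x Aᶜ).Nonempty := by
      obtain ⟨Z, hZ⟩ := h
      exact ⟨Zᶜ, CutClass_compl hZ⟩
    obtain ⟨hmem, hmin⟩ := Ycut0_spec H wH x hc
    constructor
    · have := CutClass_compl hmem
      rwa [compl_compl] at this
    · intro Z' hZ'
      rw [owt_compl]
      calc owt H wH (Ycut0 H wH x Aᶜ) ≤ owt H wH Z'ᶜ := hmin _ (CutClass_compl hZ')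
        _ = owt H wH Z' := owt_compl H wH Z'
  · rw [if_neg hl]
    exact Ycut0_spec H wH x h

lemma Ycut_compl_mem (hr : 0 < r) (A : Finset (Fin r)) (v : VH) :
    v ∈ Ycut H wH x Aᶜ ↔ v ∉ Ycut H wH x A := by
  unfold Ycut
  by_cases hl : lastIn A
  · rw [if_neg (by rw [lastIn_compl hr]; exact fun h => h hl), if_pos hl]
    simp
  · rw [if_pos (by rw [lastIn_compl hr]; exact hl), if_neg hl, compl_compl]
    simp

noncomputable def ρmap : VH → (Fin r ⊕ (Finset (Fin r) → Prop)) :=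
  fun v => if h : ∃ i, x i = v then Sum.inl h.choose
    else Sum.inr (fun A => v ∈ Ycut H wH x A)

lemma ρmap_x (i : Fin r) : ρmap H wH x (x i) = Sum.inl i := by
  unfold ρmap
  rw [dif_pos ⟨i, rfl⟩]
  congr 1
  exact x.injective (⟨i, rfl⟩ : ∃ j, x j = x i).choose_spec

lemma ρmap_int {v : VH} (hv : v ∉ Set.range ⇑x) :
    ρmap H wH x v = Sum.inr (fun A => v ∈ Ycut H wH x A) := by
  unfold ρmap
  rw [dif_neg]
  rintro ⟨i, hi⟩
  exact hv ⟨i, hi⟩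

lemma ρmap_eq_inl_iff {v : VH} {i : Fin r} : ρmap H wH x v = Sum.inl i ↔ v = x i := by
  constructor
  · intro h
    by_cases hv : ∃ j, x j = v
    · obtain ⟨j, hj⟩ := hv
      subst hj
      rw [ρmap_x] at h
      obtain rfl : j = i := by simpa using h
      rfl
    · rw [ρmap, dif_neg hv] at h
      exact absurd h (by simp)
  · rintro rfl
    exact ρmap_x H wH x i

noncomputable def nH : ℕ := (Finset.univ.image (ρmap H wH x)).card

noncomputable def ψmap : VH → Fin (nH H wH x) :=
  fun v => (Finset.univ.image (ρmap H wH x)).equivFin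
    ⟨ρmap H wH x v, Finset.mem_image_of_mem _ (Finset.mem_univ v)⟩

lemma ψmap_eq_iff {u v : VH} :
    ψmap H wH x u = ψmap H wH x v ↔ ρmap H wH x u = ρmap H wH x v := by
  unfold ψmap
  constructor
  · intro h
    have h2 := congrArg ((Finset.univ.image (ρmap H wH x)).equivFin).symm h
    simp only [Equiv.symm_apply_apply] at h2
    exact congrArg Subtype.val h2
  · intro h
    exact congrArg _ (Subtype.ext h)

lemma ψmap_surj : Function.Surjective (ψmap H wH x) := by
  intro κ
  set t := ((Finset.univ.image (ρmap H wH x)).equivFin).symm κ with ht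
  obtain ⟨v, -, hv⟩ := Finset.mem_image.1 t.2
  refine ⟨v, ?_⟩
  unfold ψmap
  have h2 : (⟨ρmap H wH x v, Finset.mem_image_of_mem _ (Finset.mem_univ v)⟩ :
      {a // a ∈ Finset.univ.image (ρmap H wH x)}) = t := Subtype.ext hv
  rw [h2, ht]
  exact Equiv.apply_symm_apply _ κ

end construct

section construct2
variable {r : ℕ} {VH : Type*} [Fintype VH]
variable (H : SimpleGraph VH) (wH : Sym2 VH → ℕ) (x : Fin r ↪ VH)

noncomputable def xnew : Fin r ↪ Fin (nH H wH x) :=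
  ⟨fun i => ψmap H wH x (x i), fun i j h => by
    rw [ψmap_eq_iff, ρmap_x, ρmap_x] at h
    exact Sum.inl.inj h⟩

lemma ψmap_eq_xnew_iff {v : VH} {i : Fin r} :
    ψmap H wH x v = xnew H wH x i ↔ v = x i := by
  show ψmap H wH x v = ψmap H wH x (x i) ↔ _
  rw [ψmap_eq_iff, ρmap_x]
  exact ρmap_eq_inl_iff H wH x

lemma ψmap_int {v : VH} (hv : v ∉ Set.range ⇑x) :
    ψmap H wH x v ∉ Set.range ⇑(xnew H wH x) := by
  rintro ⟨i, hi⟩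
  have : v = x i := by
    rw [← ψmap_eq_xnew_iff H wH x]
    exact hi.symm ▸ rfl
  exact hv ⟨i, this.symm⟩

lemma ψmap_int' {v : VH} {κ : Fin (nH H wH x)} (hκ : κ ∉ Set.range ⇑(xnew H wH x))
    (hv : ψmap H wH x v = κ) : v ∉ Set.range ⇑x := by
  rintro ⟨i, rfl⟩
  exact hκ ⟨i, by rw [← hv]; rfl⟩

def Hnew : SimpleGraph (Fin (nH H wH x)) where
  Adj a b := a ≠ b ∧ ∃ u v, ψmap H wH x u = a ∧ ψmap H wH x v = b ∧ H.Adj u v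
  symm := ⟨by
    rintro a b ⟨hne, u, v, h1, h2, h3⟩
    exact ⟨hne.symm, v, u, h2, h1, h3.symm⟩⟩
  loopless := ⟨fun a h => h.1 rfl⟩

noncomputable def wnew : Sym2 (Fin (nH H wH x)) → ℕ :=
  Sym2.lift ⟨fun a b => ∑ u : VH, ∑ v : VH,
      if ψmap H wH x u = a ∧ ψmap H wH x v = b ∧ H.Adj u v then wH s(u, v) else 0, by
    intro a b
    dsimp only
    rw [Finset.sum_comm]
    refine Finset.sum_congr rfl fun p _ => Finset.sum_congr rfl fun q _ => ?_
    refine if_congr ?_ (by rw [Sym2.eq_swap]) rfl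
    constructor
    · rintro ⟨h1, h2, h3⟩
      exact ⟨h2, h1, h3.symm⟩
    · rintro ⟨h1, h2, h3⟩
      exact ⟨h2, h1, h3.symm⟩⟩

lemma wnew_mk (a b : Fin (nH H wH x)) :
    wnew H wH x s(a, b) = ∑ u : VH, ∑ v : VH,
      if ψmap H wH x u = a ∧ ψmap H wH x v = b ∧ H.Adj u v then wH s(u, v) else 0 := rfl

lemma wnew_pos (hwH : ∀ e ∈ H.edgeSet, 0 < wH e) :
    ∀ e ∈ (Hnew H wH x).edgeSet, 0 < wnew H wH x e := by
  intro e
  refine Sym2.ind (fun a b he => ?_) e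
  rw [SimpleGraph.mem_edgeSet] at he
  obtain ⟨hne, u, v, h1, h2, h3⟩ := he
  rw [wnew_mk]
  have hterm : 0 < ∑ v' : VH,
      if ψmap H wH x u = a ∧ ψmap H wH x v' = b ∧ H.Adj u v' then wH s(u, v') else 0 := by
    have : 0 < (if ψmap H wH x u = a ∧ ψmap H wH x v = b ∧ H.Adj u v
        then wH s(u, v) else 0) := by
      rw [if_pos ⟨h1, h2, h3⟩]
      exact hwH _ (H.mem_edgeSet.mpr h3)
    exact lt_of_lt_of_le this
      (Finset.single_le_sum
        (f := fun v' => if ψmap H wH x u = a ∧ ψmap H wH x v' = b ∧ H.Adj u v' then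
          wH s(u, v') else 0)
        (fun _ _ => Nat.zero_le _) (Finset.mem_univ v))
  exact lt_of_lt_of_le hterm
    (Finset.single_le_sum
      (f := fun u' => ∑ v' : VH, if ψmap H wH x u' = a ∧ ψmap H wH x v' = b ∧ H.Adj u' v' then
        wH s(u', v') else 0)
      (fun _ _ => Nat.zero_le _) (Finset.mem_univ u))

lemma reach_map {a b : VH} (h : H.Reachable a b) :
    (Hnew H wH x).Reachable (ψmap H wH x a) (ψmap H wH x b) := by
  obtain ⟨p⟩ := h
  induction p with
  | nil => exact SimpleGraph.Reachable.refl _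
  | @cons a' c' b' hadj q ih =>
    refine SimpleGraph.Reachable.trans ?_ ih
    by_cases he : ψmap H wH x a' = ψmap H wH x c'
    · rw [he]
    · exact SimpleGraph.Adj.reachable ⟨he, a', c', rfl, rfl, hadj⟩

lemma properB_new (hx : ProperB H x) : ProperB (Hnew H wH x) (xnew H wH x) := by
  constructor
  · rintro i j ⟨hne, u, v, h1, h2, h3⟩
    rw [show (xnew H wH x) i = ψmap H wH x (x i) from rfl, ψmap_eq_iff, ρmap_x,
      ρmap_eq_inl_iff] at h1
    rw [show (xnew H wH x) j = ψmap H wH x (x j) from rfl, ψmap_eq_iff, ρmap_x,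
      ρmap_eq_inl_iff] at h2
    subst h1
    subst h2
    exact hx.1 i j h3
  · intro t
    obtain ⟨v, rfl⟩ := ψmap_surj H wH x t
    obtain ⟨i, hi⟩ := hx.2 v
    exact ⟨i, reach_map H wH x hi⟩

end construct2

lemma sum_swap4 {α β γ δ : Type*} [Fintype α] [Fintype β] [Fintype γ] [Fintype δ]
    (f : α → β → γ → δ → ℕ) :
    ∑ a : α, ∑ b : β, ∑ c : γ, ∑ d : δ, f a b c d
      = ∑ c : γ, ∑ d : δ, ∑ a : α, ∑ b : β, f a b c d := by
  have s1 : ∀ a : α, (∑ b : β, ∑ c : γ, ∑ d : δ, f a b c d)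
      = ∑ c : γ, ∑ b : β, ∑ d : δ, f a b c d := fun a => Finset.sum_comm
  rw [Finset.sum_congr rfl fun a _ => s1 a, Finset.sum_comm]
  refine Finset.sum_congr rfl fun c _ => ?_
  have s2 : ∀ a : α, (∑ b : β, ∑ d : δ, f a b c d)
      = ∑ d : δ, ∑ b : β, f a b c d := fun a => Finset.sum_comm
  rw [Finset.sum_congr rfl fun a _ => s2 a, Finset.sum_comm]

section construct3
variable {r : ℕ} {VH : Type*} [Fintype VH]
variable (H : SimpleGraph VH) (wH : Sym2 VH → ℕ) (x : Fin r ↪ VH)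

lemma owt_pullback (W : Set (Fin (nH H wH x))) :
    owt (Hnew H wH x) (wnew H wH x) W = owt H wH (ψmap H wH x ⁻¹' W) := by
  classical
  set ψ := ψmap H wH x with hψ
  set T : Fin (nH H wH x) → Fin (nH H wH x) → VH → VH → ℕ := fun a b u v =>
    if ψ u = a ∧ ψ v = b ∧ a ∈ W ∧ b ∉ W ∧ H.Adj u v then wH s(u, v) else 0 with hT
  have claim1 : ∀ a b : Fin (nH H wH x),
      (if a ∈ W ∧ b ∉ W ∧ (Hnew H wH x).Adj a b then wnew H wH x s(a, b) else 0)
        = ∑ u : VH, ∑ v : VH, T a b u v := by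
    intro a b
    simp only [hT]
    by_cases hP : a ∈ W ∧ b ∉ W
    · by_cases hA : (Hnew H wH x).Adj a b
      · rw [if_pos ⟨hP.1, hP.2, hA⟩, wnew_mk]
        refine Finset.sum_congr rfl fun u _ => Finset.sum_congr rfl fun v _ => ?_
        refine if_congr ?_ rfl rfl
        constructor
        · rintro ⟨h1, h2, h3⟩
          exact ⟨h1, h2, hP.1, hP.2, h3⟩
        · rintro ⟨h1, h2, -, -, h3⟩
          exact ⟨h1, h2, h3⟩
      · rw [if_neg (fun h => hA h.2.2), Finset.sum_eq_zero]
        intro u _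
        rw [Finset.sum_eq_zero]
        intro v _
        rw [if_neg]
        rintro ⟨h1, h2, h3, h4, h5⟩
        refine hA ⟨?_, u, v, h1, h2, h5⟩
        rintro rfl
        exact h4 h3
    · rw [if_neg (fun h => hP ⟨h.1, h.2.1⟩), Finset.sum_eq_zero]
      intro u _
      rw [Finset.sum_eq_zero]
      intro v _
      rw [if_neg]
      rintro ⟨-, -, h3, h4, -⟩
      exact hP ⟨h3, h4⟩
  have claim2 : ∀ u v : VH,
      (∑ a : Fin (nH H wH x), ∑ b : Fin (nH H wH x), T a b u v)
        = if ψ u ∈ W ∧ ψ v ∉ W ∧ H.Adj u v then wH s(u, v) else 0 := by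
    intro u v
    have h1 : ∀ a b, T a b u v = if ψ u = a then
        (if ψ v = b then (if a ∈ W ∧ b ∉ W ∧ H.Adj u v then wH s(u, v) else 0) else 0)
          else 0 := by
      intro a b
      simp only [hT]
      by_cases h1 : ψ u = a <;> by_cases h2 : ψ v = b <;>
        simp [h1, h2, and_assoc] <;> tauto
    calc (∑ a, ∑ b, T a b u v)
        = ∑ a, ∑ b, if ψ u = a then
            (if ψ v = b then (if a ∈ W ∧ b ∉ W ∧ H.Adj u v then wH s(u, v) else 0) else 0)
            else 0 :=
          Finset.sum_congr rfl fun a _ => Finset.sum_congr rfl fun b _ => h1 a b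
      _ = ∑ a, if ψ u = a then
            (if a ∈ W ∧ ψ v ∉ W ∧ H.Adj u v then wH s(u, v) else 0) else 0 := by
          refine Finset.sum_congr rfl fun a _ => ?_
          by_cases h : ψ u = a
          · simp only [if_pos h, Finset.sum_ite_eq]
            simp
          · simp only [if_neg h, Finset.sum_const_zero]
      _ = if ψ u ∈ W ∧ ψ v ∉ W ∧ H.Adj u v then wH s(u, v) else 0 := by
          rw [Finset.sum_ite_eq]
          simp
  unfold owt
  calc (∑ a, ∑ b, if a ∈ W ∧ b ∉ W ∧ (Hnew H wH x).Adj a b then wnew H wH x s(a, b) else 0)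
      = ∑ a, ∑ b, ∑ u : VH, ∑ v : VH, T a b u v :=
        Finset.sum_congr rfl fun a _ => Finset.sum_congr rfl fun b _ => claim1 a b
    _ = ∑ u : VH, ∑ v : VH, ∑ a, ∑ b, T a b u v := sum_swap4 T
    _ = ∑ u : VH, ∑ v : VH,
          if u ∈ ψ ⁻¹' W ∧ v ∉ ψ ⁻¹' W ∧ H.Adj u v then wH s(u, v) else 0 :=
        Finset.sum_congr rfl fun u _ => Finset.sum_congr rfl fun v _ => claim2 u v

def SatR (Z : Set VH) : Prop :=
  ∀ u v, ρmap H wH x u = ρmap H wH x v → (u ∈ Z ↔ v ∈ Z)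

lemma sat_preimage_image {Z : Set VH} (hZ : SatR H wH x Z) :
    ψmap H wH x ⁻¹' (ψmap H wH x '' Z) = Z := by
  ext v
  constructor
  · rintro ⟨u, hu, huv⟩
    rw [ψmap_eq_iff] at huv
    exact (hZ u v huv).1 hu
  · intro hv
    exact Set.mem_image_of_mem _ hv

lemma sat_Ycut (A : Finset (Fin r)) : SatR H wH x (Ycut H wH x A) := by
  intro u v huv
  by_cases hu : u ∈ Set.range ⇑x
  · obtain ⟨i, rfl⟩ := hu
    rw [ρmap_x] at huv
    have : v = x i := (ρmap_eq_inl_iff H wH x).1 huv.symm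
    rw [this]
  · by_cases hv : v ∈ Set.range ⇑x
    · obtain ⟨i, rfl⟩ := hv
      rw [ρmap_x, ρmap_int H wH x hu] at huv
      exact absurd huv (by simp)
    · rw [ρmap_int H wH x hu, ρmap_int H wH x hv, Sum.inr.injEq] at huv
      exact iff_of_eq (congrFun huv A)

lemma sat_bdry (A : Finset (Fin r)) : SatR H wH x {v | ∃ i ∈ A, x i = v} := by
  intro u v huv
  constructor
  · rintro ⟨i, hi, rfl⟩
    rw [ρmap_x] at huv
    have : v = x i := (ρmap_eq_inl_iff H wH x).1 huv.symm
    exact ⟨i, hi, this.symm⟩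
  · rintro ⟨i, hi, rfl⟩
    rw [ρmap_x] at huv
    have : u = x i := (ρmap_eq_inl_iff H wH x).1 huv
    exact ⟨i, hi, this.symm⟩

lemma sat_bdry_union (A : Finset (Fin r)) :
    SatR H wH x ({v | ∃ i ∈ A, x i = v} ∪ {v | v ∉ Set.range ⇑x}) := by
  intro u v huv
  by_cases hu : u ∈ Set.range ⇑x
  · obtain ⟨i, rfl⟩ := hu
    rw [ρmap_x] at huv
    have : v = x i := (ρmap_eq_inl_iff H wH x).1 huv.symm
    rw [this]
  · by_cases hv : v ∈ Set.range ⇑x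
    · obtain ⟨i, rfl⟩ := hv
      rw [ρmap_x, ρmap_int H wH x hu] at huv
      exact absurd huv (by simp)
    · simp only [Set.mem_union, Set.mem_setOf_eq]
      constructor
      · intro _
        exact Or.inr hv
      · intro _
        exact Or.inr hu

end construct3

section construct4
variable {r : ℕ} {VH : Type*} [Fintype VH]
variable (H : SimpleGraph VH) (wH : Sym2 VH → ℕ) (x : Fin r ↪ VH)

noncomputable def emb1 : Finset (Fin (r - 1)) → Finset (Fin r) := fun c =>
  c.map ⟨Fin.castLE (Nat.sub_le r 1), Fin.castLE_injective _⟩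

lemma cover0 {A : Finset (Fin r)} (h : ∀ i ∈ A, (i : ℕ) < r - 1) :
    ∃ c, emb1 c = A := by
  classical
  refine ⟨Finset.univ.filter (fun c => Fin.castLE (Nat.sub_le r 1) c ∈ A), ?_⟩
  ext i
  simp only [emb1, Finset.mem_map, Finset.mem_filter, Finset.mem_univ, true_and,
    Function.Embedding.coeFn_mk]
  constructor
  · rintro ⟨c, hc, rfl⟩
    exact hc
  · intro hi
    exact ⟨⟨(i : ℕ), h i hi⟩, by simpa [Fin.ext_iff] using hi, by simp [Fin.ext_iff]⟩

lemma cover (A : Finset (Fin r)) :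
    (∃ c, emb1 c = A) ∨ (0 < r ∧ ∃ c, emb1 c = Aᶜ) := by
  by_cases hall : ∀ i ∈ A, (i : ℕ) < r - 1
  · exact Or.inl (cover0 hall)
  · push_neg at hall
    obtain ⟨i₀, hi₀A, hge⟩ := hall
    have hr : 0 < r := i₀.pos
    have hi₀ : (i₀ : ℕ) = r - 1 := by
      have := i₀.isLt
      omega
    refine Or.inr ⟨hr, cover0 fun i hi => ?_⟩
    rw [Finset.mem_compl] at hi
    have : (i : ℕ) ≠ r - 1 := by
      intro h
      exact hi (by rwa [show i = i₀ from Fin.ext (by omega)])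
    have := i.isLt
    omega

lemma nH_le : nH H wH x ≤ 2 ^ 2 ^ (r - 1) + r := by
  classical
  set J : (Fin r ⊕ (Finset (Fin r) → Prop)) → (Fin r ⊕ (Finset (Fin (r - 1)) → Prop)) :=
    Sum.map id (fun g => fun c => g (emb1 c)) with hJ
  have hJinj : Set.InjOn J ↑(Finset.univ.image (ρmap H wH x)) := by
    intro t1 ht1 t2 ht2 heq
    rw [Finset.mem_coe] at ht1 ht2
    match t1, t2 with
    | Sum.inl i, Sum.inl j =>
      simp only [hJ, Sum.map_inl, Sum.inl.injEq, id] at heq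
      rw [heq]
    | Sum.inl i, Sum.inr g => simp [hJ] at heq
    | Sum.inr g, Sum.inl i => simp [hJ] at heq
    | Sum.inr g1, Sum.inr g2 =>
      simp only [hJ, Sum.map_inr, Sum.inr.injEq] at heq
      obtain ⟨v1, -, hv1⟩ := Finset.mem_image.1 ht1
      obtain ⟨v2, -, hv2⟩ := Finset.mem_image.1 ht2
      have hv1r : v1 ∉ Set.range ⇑x := by
        rintro ⟨i, rfl⟩
        rw [ρmap_x] at hv1
        exact absurd hv1 (by simp)
      have hv2r : v2 ∉ Set.range ⇑x := by
        rintro ⟨i, rfl⟩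
        rw [ρmap_x] at hv2
        exact absurd hv2 (by simp)
      rw [ρmap_int H wH x hv1r] at hv1
      rw [ρmap_int H wH x hv2r] at hv2
      have hg1 : g1 = fun A => v1 ∈ Ycut H wH x A := (Sum.inr.inj hv1).symm
      have hg2 : g2 = fun A => v2 ∈ Ycut H wH x A := (Sum.inr.inj hv2).symm
      subst hg1
      subst hg2
      congr 1
      funext A
      rcases cover A with ⟨c, hc⟩ | ⟨hr, c, hc⟩
      · have := congrFun heq c
        rwa [hc] at this
      · have hAc := congrFun heq c
        rw [hc] at hAc
        apply propext
        have e1 := Ycut_compl_mem H wH x hr A v1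
        have e2 := Ycut_compl_mem H wH x hr A v2
        have e3 : (v1 ∈ Ycut H wH x Aᶜ) ↔ (v2 ∈ Ycut H wH x Aᶜ) := iff_of_eq hAc
        tauto
  have hle : nH H wH x ≤ (Finset.univ : Finset (Fin r ⊕ (Finset (Fin (r - 1)) → Prop))).card :=
    Finset.card_le_card_of_injOn J (fun _ _ => Finset.mem_univ _) hJinj
  calc nH H wH x ≤ _ := hle
    _ = 2 ^ 2 ^ (r - 1) + r := by
        rw [Finset.card_univ, Fintype.card_sum, Fintype.card_fin, Fintype.card_fun,
          show Fintype.card Prop = 2 from rfl, Fintype.card_finset, Fintype.card_fin]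
        ring

lemma exists_hat (A : Finset (Fin r)) (XH : Set VH) (htr : ∀ i, x i ∈ XH ↔ i ∈ A) :
    ∃ Z : Set VH,
      ψmap H wH x ⁻¹' (ψmap H wH x '' Z) = Z
      ∧ (∀ i, x i ∈ Z ↔ i ∈ A)
      ∧ owt H wH Z ≤ owt H wH XH
      ∧ ((∃ v, v ∉ Set.range ⇑x ∧ v ∈ XH) → ∃ v, v ∉ Set.range ⇑x ∧ v ∈ Z)
      ∧ ((∃ v, v ∉ Set.range ⇑x ∧ v ∉ XH) → ∃ v, v ∉ Set.range ⇑x ∧ v ∉ Z) := by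
  classical
  by_cases hint : ∃ v, v ∉ Set.range ⇑x ∧ v ∈ XH
  · by_cases hco : ∃ v, v ∉ Set.range ⇑x ∧ v ∉ XH
    · have hXc : XH ∈ CutClass H x A := ⟨htr, hint, hco⟩
      obtain ⟨⟨htr', hint', hco'⟩, hmin⟩ := Ycut_spec H wH x ⟨XH, hXc⟩
      exact ⟨Ycut H wH x A, sat_preimage_image H wH x (sat_Ycut H wH x A), htr',
        hmin XH hXc, fun _ => hint', fun _ => hco'⟩
    · push_neg at hco
      have hXeq : XH = {v | ∃ i ∈ A, x i = v} ∪ {v | v ∉ Set.range ⇑x} := by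
        ext v
        simp only [Set.mem_union, Set.mem_setOf_eq]
        constructor
        · intro hv
          by_cases hvr : v ∈ Set.range ⇑x
          · obtain ⟨i, rfl⟩ := hvr
            exact Or.inl ⟨i, (htr i).1 hv, rfl⟩
          · exact Or.inr hvr
        · rintro (⟨i, hi, rfl⟩ | hvr)
          · exact (htr i).2 hi
          · exact hco v hvr
      refine ⟨XH, ?_, htr, le_refl _, fun h => h, fun h => h⟩
      rw [hXeq]
      exact sat_preimage_image H wH x (sat_bdry_union H wH x A)
  · push_neg at hint
    have hXeq : XH = {v | ∃ i ∈ A, x i = v} := by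
      ext v
      simp only [Set.mem_setOf_eq]
      constructor
      · intro hv
        by_cases hvr : v ∈ Set.range ⇑x
        · obtain ⟨i, rfl⟩ := hvr
          exact ⟨i, (htr i).1 hv, rfl⟩
        · exact absurd hv (hint v hvr)
      · rintro ⟨i, hi, rfl⟩
        exact (htr i).2 hi
    refine ⟨XH, ?_, htr, le_refl _,
      fun h => absurd h (by rintro ⟨v, h1, h2⟩; exact hint v h1 h2), fun h => h⟩
    rw [hXeq]
    exact sat_preimage_image H wH x (sat_bdry H wH x A)

end construct4

section mainpart
variable {r : ℕ} {VF VH VK : Type*} [Fintype VF] [Fintype VH] [Fintype VK]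

lemma bsumw_pos (F : SimpleGraph VF) (wF : Sym2 VF → ℕ) (K : SimpleGraph VK)
    (wK : Sym2 VK → ℕ) (y : Fin r → VF) (z : Fin r → VK)
    (hwF : ∀ e ∈ F.edgeSet, 0 < wF e) (hwK : ∀ e ∈ K.edgeSet, 0 < wK e) :
    ∀ e ∈ (BSum F y K z).edgeSet, 0 < BSumW wF wK y z e := by
  intro e
  refine Sym2.ind (fun a b he => ?_) e
  rw [SimpleGraph.mem_edgeSet] at he
  match a, b with
  | Sum.inl a, Sum.inl b =>
    rw [bsum_adj_ll] at he
    rw [bsumw_ll]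
    exact hwF _ (F.mem_edgeSet.mpr he)
  | Sum.inr a, Sum.inr b =>
    rw [bsum_adj_rr] at he
    rw [bsumw_rr]
    exact hwK _ (K.mem_edgeSet.mpr he)
  | Sum.inl a, Sum.inr b =>
    rw [bsum_adj_lr] at he
    rw [bsumw_lr]
    obtain ⟨i, rfl, hadj⟩ := he
    have h0 : 0 < (if y i = y i then wK s(z i, b.1) else 0) := by
      rw [if_pos rfl]
      exact hwK _ (K.mem_edgeSet.mpr hadj)
    exact lt_of_lt_of_le h0 (Finset.single_le_sum
      (f := fun j => if y j = y i then wK s(z j, b.1) else 0)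
      (fun _ _ => Nat.zero_le _) (Finset.mem_univ i))
  | Sum.inr b, Sum.inl a =>
    rw [bsum_adj_rl] at he
    rw [bsumw_rl]
    obtain ⟨i, rfl, hadj⟩ := he
    have h0 : 0 < (if y i = y i then wK s(z i, b.1) else 0) := by
      rw [if_pos rfl]
      exact hwK _ (K.mem_edgeSet.mpr hadj)
    exact lt_of_lt_of_le h0 (Finset.single_le_sum
      (f := fun j => if y j = y i then wK s(z j, b.1) else 0)
      (fun _ _ => Nat.zero_le _) (Finset.mem_univ i))

variable (H : SimpleGraph VH) (wH : Sym2 VH → ℕ) (x : Fin r ↪ VH)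
  (F : SimpleGraph VF) (wF : Sym2 VF → ℕ) (y : Fin r ↪ VF)

set_option maxHeartbeats 2000000 in
lemma corr12 (hx : ProperB H x) (X1 : Set (VF ⊕ {v : VH // v ∉ Set.range ⇑x}))
    (hne : X1.Nonempty) (hco : X1ᶜ.Nonempty) :
    ∃ X2 : Set (VF ⊕ {κ // κ ∉ Set.range ⇑(xnew H wH x)}), X2.Nonempty ∧ X2ᶜ.Nonempty ∧
      owt (BSum F ⇑y (Hnew H wH x) ⇑(xnew H wH x))
          (BSumW wF (wnew H wH x) ⇑y ⇑(xnew H wH x)) X2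
        ≤ owt (BSum F ⇑y H ⇑x) (BSumW wF wH ⇑y ⇑x) X1 := by
  classical
  set A : Finset (Fin r) := Finset.univ.filter (fun i => Sum.inl (y i) ∈ X1) with hA
  have htr : ∀ i, x i ∈ BXK ⇑y ⇑x X1 ↔ i ∈ A := by
    intro i
    rw [mem_BXK_z ⇑y ⇑x x.injective X1 i, hA]
    simp
  obtain ⟨Z, hsat, htrZ, hleZ, hflag1, hflag2⟩ := exists_hat H wH x A (BXK ⇑y ⇑x X1) htr
  set X2 : Set (VF ⊕ {κ // κ ∉ Set.range ⇑(xnew H wH x)}) :=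
    {t | Sum.elim (fun a => Sum.inl a ∈ X1) (fun q => q.1 ∈ ψmap H wH x '' Z) t} with hX2
  have hBXF : BXF ⇑(xnew H wH x) X2 = BXF ⇑x X1 := rfl
  have hBXK2 : BXK ⇑y ⇑(xnew H wH x) X2 = ψmap H wH x '' Z := by
    ext κ
    unfold BXK
    simp only [Set.mem_setOf_eq]
    constructor
    · rintro (⟨i, rfl, hmem⟩ | ⟨h, hmem⟩)
      · have hiA : i ∈ A := by
          rw [hA]
          simpa using (show Sum.inl (y i) ∈ X1 from hmem)
        exact ⟨x i, (htrZ i).2 hiA, rfl⟩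
      · exact hmem
    · rintro ⟨v, hv, rfl⟩
      by_cases hvr : v ∈ Set.range ⇑x
      · obtain ⟨i, rfl⟩ := hvr
        left
        refine ⟨i, rfl, ?_⟩
        have hiA : i ∈ A := (htrZ i).1 hv
        rw [hA] at hiA
        exact (show Sum.inl (y i) ∈ X1 by simpa using hiA)
      · right
        exact ⟨ψmap_int H wH x hvr, ⟨v, hv, rfl⟩⟩
  have hw2 : owt (BSum F ⇑y (Hnew H wH x) ⇑(xnew H wH x))
      (BSumW wF (wnew H wH x) ⇑y ⇑(xnew H wH x)) X2
      = owt F wF (BXF ⇑x X1) + owt H wH Z := by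
    have h := owt_BSum ⇑y ⇑(xnew H wH x) F wF (Hnew H wH x) (wnew H wH x) y.injective
      (xnew H wH x).injective (properB_new H wH x hx).1 X2
    rw [hBXF, hBXK2, owt_pullback, hsat] at h
    exact (owt_instIrrel _ _ _ _ _).trans h
  have hw1 : owt (BSum F ⇑y H ⇑x) (BSumW wF wH ⇑y ⇑x) X1
      = owt F wF (BXF ⇑x X1) + owt H wH (BXK ⇑y ⇑x X1) :=
    owt_BSum ⇑y ⇑x F wF H wH y.injective x.injective hx.1 X1
  refine ⟨X2, ?_, ?_, by rw [hw2, hw1]; exact Nat.add_le_add_left hleZ _⟩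
  · obtain ⟨t, ht⟩ := hne
    match t with
    | Sum.inl a => exact ⟨Sum.inl a, ht⟩
    | Sum.inr q =>
      have hq : q.1 ∈ BXK ⇑y ⇑x X1 := (mem_BXK_int ⇑y ⇑x X1 q).2 ht
      obtain ⟨v, hv1, hv2⟩ := hflag1 ⟨q.1, q.2, hq⟩
      exact ⟨Sum.inr ⟨ψmap H wH x v, ψmap_int H wH x hv1⟩, ⟨v, hv2, rfl⟩⟩
  · obtain ⟨t, ht⟩ := hco
    match t with
    | Sum.inl a => exact ⟨Sum.inl a, ht⟩
    | Sum.inr q =>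
      have hq : q.1 ∉ BXK ⇑y ⇑x X1 := fun h => ht ((mem_BXK_int ⇑y ⇑x X1 q).1 h)
      obtain ⟨v, hv1, hv2⟩ := hflag2 ⟨q.1, q.2, hq⟩
      refine ⟨Sum.inr ⟨ψmap H wH x v, ψmap_int H wH x hv1⟩, fun hmem => ?_⟩
      exact hv2 (by rw [← hsat]; exact hmem)

set_option maxHeartbeats 2000000 in
lemma corr21 (hx : ProperB H x) (X2 : Set (VF ⊕ {κ // κ ∉ Set.range ⇑(xnew H wH x)}))
    (hne : X2.Nonempty) (hco : X2ᶜ.Nonempty) :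
    ∃ X1 : Set (VF ⊕ {v : VH // v ∉ Set.range ⇑x}), X1.Nonempty ∧ X1ᶜ.Nonempty ∧
      owt (BSum F ⇑y H ⇑x) (BSumW wF wH ⇑y ⇑x) X1
        ≤ owt (BSum F ⇑y (Hnew H wH x) ⇑(xnew H wH x))
            (BSumW wF (wnew H wH x) ⇑y ⇑(xnew H wH x)) X2 := by
  classical
  set W : Set (Fin (nH H wH x)) := BXK ⇑y ⇑(xnew H wH x) X2 with hW
  set X1 : Set (VF ⊕ {v : VH // v ∉ Set.range ⇑x}) :=
    {t | Sum.elim (fun a => Sum.inl a ∈ X2) (fun q => ψmap H wH x q.1 ∈ W) t} with hX1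
  have hBXF : BXF ⇑x X1 = BXF ⇑(xnew H wH x) X2 := rfl
  have hBXK1 : BXK ⇑y ⇑x X1 = ψmap H wH x ⁻¹' W := by
    ext v
    constructor
    · rintro (⟨i, rfl, hmem⟩ | ⟨h, hmem⟩)
      · show ψmap H wH x (x i) ∈ W
        rw [show ψmap H wH x (x i) = xnew H wH x i from rfl, hW,
          mem_BXK_z ⇑y ⇑(xnew H wH x) (xnew H wH x).injective X2 i]
        exact hmem
      · exact hmem
    · intro hv
      by_cases hvr : v ∈ Set.range ⇑x
      · obtain ⟨i, rfl⟩ := hvr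
        left
        refine ⟨i, rfl, ?_⟩
        have h2 : xnew H wH x i ∈ W := hv
        rw [hW, mem_BXK_z ⇑y ⇑(xnew H wH x) (xnew H wH x).injective X2 i] at h2
        exact h2
      · right
        exact ⟨hvr, hv⟩
  have hw1 : owt (BSum F ⇑y H ⇑x) (BSumW wF wH ⇑y ⇑x) X1
      = owt F wF (BXF ⇑(xnew H wH x) X2)
        + owt (Hnew H wH x) (wnew H wH x) W := by
    have h := owt_BSum ⇑y ⇑x F wF H wH y.injective x.injective hx.1 X1
    rw [hBXF, hBXK1, ← owt_pullback] at h
    exact (owt_instIrrel _ _ _ _ _).trans h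
  have hw2 : owt (BSum F ⇑y (Hnew H wH x) ⇑(xnew H wH x))
      (BSumW wF (wnew H wH x) ⇑y ⇑(xnew H wH x)) X2
      = owt F wF (BXF ⇑(xnew H wH x) X2) + owt (Hnew H wH x) (wnew H wH x) W := by
    have h := owt_BSum ⇑y ⇑(xnew H wH x) F wF (Hnew H wH x) (wnew H wH x) y.injective
      (xnew H wH x).injective (properB_new H wH x hx).1 X2
    exact (owt_instIrrel _ _ _ _ _).trans h
  refine ⟨X1, ?_, ?_, le_of_eq (hw1.trans hw2.symm)⟩
  · obtain ⟨t, ht⟩ := hne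
    match t with
    | Sum.inl a => exact ⟨Sum.inl a, ht⟩
    | Sum.inr q =>
      have hq : q.1 ∈ W := (mem_BXK_int ⇑y ⇑(xnew H wH x) X2 q).2 ht
      obtain ⟨v, hv⟩ := ψmap_surj H wH x q.1
      refine ⟨Sum.inr ⟨v, ψmap_int' H wH x q.2 hv⟩, ?_⟩
      show ψmap H wH x v ∈ W
      rw [hv]
      exact hq
  · obtain ⟨t, ht⟩ := hco
    match t with
    | Sum.inl a => exact ⟨Sum.inl a, ht⟩
    | Sum.inr q =>
      have hq : q.1 ∉ W := fun h => ht ((mem_BXK_int ⇑y ⇑(xnew H wH x) X2 q).1 h)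
      obtain ⟨v, hv⟩ := ψmap_surj H wH x q.1
      refine ⟨Sum.inr ⟨v, ψmap_int' H wH x q.2 hv⟩, fun hmem => ?_⟩
      have : ψmap H wH x v ∈ W := hmem
      rw [hv] at this
      exact hq this

end mainpart


/-- Let `(H,x)` be a properly `r`-boundaried weighted graph and `p` a positive integer.
Then there is a properly `r`-boundaried weighted graph `(H',x')` with at most
`2^{2^{r-1}} + r` vertices such that for every `r`-boundaried weighted graph `(F,y)`:
if `G = (F,y) ⊕_b (H,x)` is connected and `λ(G) ≤ p`, then `(F,y) ⊕_b (H',x')` is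
connected and `λ((F,y) ⊕_b (H',x')) = λ(G)`. -/
theorem stmt_6 {r p : ℕ} (hp : 0 < p) {VH : Type*} [Fintype VH]
    (H : SimpleGraph VH) (wH : Sym2 VH → ℕ) (hwH : ∀ e ∈ H.edgeSet, 0 < wH e)
    (x : Fin r ↪ VH) (hx : ProperB H x) :
    ∃ (n : ℕ) (H' : SimpleGraph (Fin n)) (w' : Sym2 (Fin n) → ℕ) (x' : Fin r ↪ Fin n),
      n ≤ 2 ^ 2 ^ (r - 1) + r ∧ ProperB H' x' ∧ (∀ e ∈ H'.edgeSet, 0 < w' e) ∧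
      ∀ (VF : Type*) [Fintype VF] (F : SimpleGraph VF) (wF : Sym2 VF → ℕ),
        (∀ e ∈ F.edgeSet, 0 < wF e) → ∀ y : Fin r ↪ VF,
        (BSum F ⇑y H ⇑x).Connected →
        weightConn (BSum F ⇑y H ⇑x) (BSumW wF wH ⇑y ⇑x) ≤ (p : ℕ∞) →
        (BSum F ⇑y H' ⇑x').Connected ∧
        weightConn (BSum F ⇑y H' ⇑x') (BSumW wF w' ⇑y ⇑x') =
          weightConn (BSum F ⇑y H ⇑x) (BSumW wF wH ⇑y ⇑x) := by
  classical
  refine ⟨nH H wH x, Hnew H wH x, wnew H wH x, xnew H wH x, nH_le H wH x,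
    properB_new H wH x hx, wnew_pos H wH x hwH, ?_⟩
  intro VF _ F wF hwF y hconn _hle
  have hNE2 : Nonempty (VF ⊕ {κ // κ ∉ Set.range ⇑(xnew H wH x)}) := by
    obtain ⟨t⟩ := hconn.nonempty
    match t with
    | Sum.inl a => exact ⟨Sum.inl a⟩
    | Sum.inr v => exact ⟨Sum.inr ⟨ψmap H wH x v.1, ψmap_int H wH x v.2⟩⟩
  exact transfer (BSum F ⇑y H ⇑x) (BSumW wF wH ⇑y ⇑x)
    (BSum F ⇑y (Hnew H wH x) ⇑(xnew H wH x)) (BSumW wF (wnew H wH x) ⇑y ⇑(xnew H wH x))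
    hconn (bsumw_pos F wF H wH ⇑y ⇑x hwF hwH)
    (corr12 H wH x F wF y hx) (corr21 H wH x F wF y hx)
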